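/- Let f : ℂ → ℂ and let x_0, x_1, … be pairwise distinct complex numbers. Define the inverse differences by φ_0[x_k] = f(x_k) and φ_{i+1}[x_0,…,x_i,x_k] = (x_k − x_i)/(φ_i[x_0,…,x_{i-1},x_k] − φ_i[x_0,…,x_i]) for k > i. Fix i ≥ 0 and k > i, assume all inverse differences φ_j[x_0,…,x_{j-1},x_m] for 0 ≤ j ≤ i and m ∈ {j, j+1, …, i} ∪ {k} are well defined, set d_m = φ_m[x_0,…,x_m], define A_m, B_m by the Wallis recurrence A_{-2} = 0, B_{-2} = 1, A_{-1} = 1, B_{-1} = 0, A_m = d_m·A_{m-1} + (X − x_{m-1})·A_{m-2}, B_m = d_m·B_{m-1} + (X − x_{m-1})·B_{m-2}, and set R_m(x) = f(x)B_m(x) − A_m(x). If R_i(x_k) ≠ 0, then φ_{i+1}[x_0,…,x_i,x_k] is well defined and φ_{i+1}[x_0,…,x_i,x_k] = −(x_k − x_i)·R_{i-1}(x_k)/R_i(x_k). -/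
import Mathlib


open Polynomial

/-- Wallis numerator polynomials of the Thiele-type continued fraction
`d₀ + (x − x₀)/(d₁ + (x − x₁)/(d₂ + …))`, with index shifted by 2:
`wA d xs 0 = A₋₂ = 0`, `wA d xs 1 = A₋₁ = 1`, `wA d xs (m+2) = A_m`. -/
noncomputable def wA (d xs : ℕ → ℂ) : ℕ → ℂ[X]
  | 0 => 0
  | 1 => 1
  | 2 => C (d 0)
  | (m + 3) => C (d (m + 1)) * wA d xs (m + 2) + (X - C (xs m)) * wA d xs (m + 1)

/-- Wallis denominator polynomials, with index shifted by 2: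
`wB d xs 0 = B₋₂ = 1`, `wB d xs 1 = B₋₁ = 0`, `wB d xs (m+2) = B_m`. -/
noncomputable def wB (d xs : ℕ → ℂ) : ℕ → ℂ[X]
  | 0 => 1
  | 1 => 0
  | 2 => 1
  | (m + 3) => C (d (m + 1)) * wB d xs (m + 2) + (X - C (xs m)) * wB d xs (m + 1)

/-- Inverse differences of `f` at the points `xs`: `phi f xs i k` denotes
`φ_i[x_0, …, x_{i-1}, x_k]`, defined by `φ_0[x_k] = f(x_k)` and
`φ_{i+1}[x_0,…,x_i,x_k] = (x_k − x_i)/(φ_i[x_0,…,x_{i-1},x_k] − φ_i[x_0,…,x_i])`. -/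
noncomputable def phi (f : ℂ → ℂ) (xs : ℕ → ℂ) : ℕ → ℕ → ℂ
  | 0, k => f (xs k)
  | (i + 1), k => (xs k - xs i) / (phi f xs i k - phi f xs i i)

/-- The linearized residual `R_m(x) = f(x)·B_m(x) − A_m(x)` of the `m`th convergent of a
Thiele-type continued fraction (index shifted by 2, so `linRes f d xs x (m+2) = R_m(x)`,
`linRes f d xs x 1 = R_{-1}(x) = −1`, `linRes f d xs x 0 = R_{-2}(x) = f(x)`). -/
noncomputable def linRes (f : ℂ → ℂ) (d xs : ℕ → ℂ) (x : ℂ) (k : ℕ) : ℂ :=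
  f x * (wB d xs k).eval x - (wA d xs k).eval x
/-- Inverse differences as ratios of linearized residuals: if all inverse differences
`φ_j[x_0,…,x_{j-1},x_m]` for `0 ≤ j ≤ i` and `m ∈ {j,…,i} ∪ {k}` are well defined (every
denominator in the recursion is nonzero) and `R_i(x_k) ≠ 0`, then `φ_{i+1}[x_0,…,x_i,x_k]`
is well defined and equals `−(x_k − x_i)·R_{i-1}(x_k)/R_i(x_k)`, where `d_m = φ_m[x_0,…,x_m]`
and `R_m(x) = f(x)B_m(x) − A_m(x)`. -/
theorem thiele_inverse_difference_residual (f : ℂ → ℂ) (xs : ℕ → ℂ)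
    (hdist : Function.Injective xs) (i k : ℕ) (hik : i < k)
    (hwd : ∀ j m, j < i → ((j < m ∧ m ≤ i) ∨ m = k) → phi f xs j m ≠ phi f xs j j)
    (hR : linRes f (fun m => phi f xs m m) xs (xs k) (i + 2) ≠ 0) :
    phi f xs i k ≠ phi f xs i i ∧
      phi f xs (i + 1) k =
        -(xs k - xs i) * linRes f (fun m => phi f xs m m) xs (xs k) (i + 1) /
          linRes f (fun m => phi f xs m m) xs (xs k) (i + 2) := by
  have key : ∀ m, m ≤ i → linRes f (fun m => phi f xs m m) xs (xs k) (m+2)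
      = (phi f xs m m - phi f xs m k) * linRes f (fun m => phi f xs m m) xs (xs k) (m+1) := by
    intro m
    induction m with
    | zero =>
      intro _
      simp only [linRes, wA, wB, phi]
      simp
    | succ n ih =>
      intro hle
      have hn : n < i := lt_of_lt_of_le (Nat.lt_succ_self n) hle
      have ihn := ih hn.le
      have hne : phi f xs n k - phi f xs n n ≠ 0 :=
        sub_ne_zero.mpr (hwd n k hn (Or.inr rfl))
      have hp : phi f xs (n+1) k * (phi f xs n k - phi f xs n n) = xs k - xs n := by
        rw [phi]
        field_simp
      have hrec : linRes f (fun m => phi f xs m m) xs (xs k) (n+3)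
          = phi f xs (n+1) (n+1) * linRes f (fun m => phi f xs m m) xs (xs k) (n+2)
            + (xs k - xs n) * linRes f (fun m => phi f xs m m) xs (xs k) (n+1) := by
        simp only [linRes, wA, wB]
        simp
        ring
      rw [hrec, ihn, ← hp]
      ring
  have hEi := key i le_rfl
  have hL1 : linRes f (fun m => phi f xs m m) xs (xs k) (i+1) ≠ 0 := by
    intro h; apply hR; rw [hEi, h, mul_zero]
  have hdi : phi f xs i i - phi f xs i k ≠ 0 := by
    intro h; apply hR; rw [hEi, h, zero_mul]
  have hne : phi f xs i k ≠ phi f xs i i := fun h => hdi (by rw [h]; ring)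
  refine ⟨hne, ?_⟩
  rw [phi, hEi]
  rw [div_eq_div_iff (sub_ne_zero.mpr hne) (mul_ne_zero hdi hL1)]
  ring
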